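/- There exists a constant C > 0 such that for every positive integer p not divisible by 3, | 2·min{ √(g((2π/p)·⌊p/3⌋)), √(g((2π/p)·⌈p/3⌉)) } − 2π/(√3·p) | ≤ C/p². In particular, the quantity 2·min{√(g((2π/p)⌊p/3⌋)), √(g((2π/p)⌈p/3⌉))} equals 2π/(√3 p) + O(p⁻²) as p → ∞ over p not divisible by 3. -/

import Mathlib

open Real

/-- `g(θ) = 3 + 2cos θ − 4cos(θ/2)`. -/
noncomputable def gFun (θ : ℝ) : ℝ := 3 + 2 * cos θ - 4 * cos (θ / 2)

lemma gFun_eq (θ : ℝ) : gFun θ = (2 * cos (θ / 2) - 1) ^ 2 := by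
  have h : cos (2 * (θ / 2)) = 2 * cos (θ / 2) ^ 2 - 1 := Real.cos_two_mul _
  have h2 : 2 * (θ / 2) = θ := by ring
  rw [h2] at h
  unfold gFun
  nlinarith [h]

lemma sqrt_gFun (θ : ℝ) : Real.sqrt (gFun θ) = |2 * cos (θ / 2) - 1| := by
  rw [gFun_eq, Real.sqrt_sq_eq_abs]

lemma sin_sub_bound {δ : ℝ} (h0 : 0 ≤ δ) : δ - sin δ ≤ 2 * δ ^ 2 := by
  rcases le_or_gt δ 1 with h | h
  · rcases eq_or_lt_of_le h0 with rfl | h0'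
    · simp
    · have := Real.sin_gt_sub_cube h0'
      nlinarith
  · have := Real.neg_one_le_sin δ
    nlinarith

lemma one_sub_cos_bound {δ : ℝ} (h0 : 0 ≤ δ) : 1 - cos δ ≤ δ ^ 2 / 2 := by
  have h : cos (2 * (δ / 2)) = 1 - 2 * sin (δ / 2) ^ 2 := by
    rw [Real.cos_two_mul, ← Real.sin_sq_add_cos_sq (δ / 2)]; ring
  have h2 : (2 : ℝ) * (δ / 2) = δ := by ring
  rw [h2] at h
  have hle : sin (δ / 2) ≤ δ / 2 := Real.sin_le (by linarith)
  have hge : -(δ / 2) ≤ sin (δ / 2) := by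
    rcases le_or_gt (δ / 2) π with hp | hp
    · have := Real.sin_nonneg_of_nonneg_of_le_pi (by linarith : (0:ℝ) ≤ δ / 2) hp
      linarith
    · have := Real.neg_one_le_sin (δ / 2)
      have : (1:ℝ) ≤ δ / 2 := le_trans (by linarith [Real.pi_gt_three]) hp.le
      nlinarith [Real.neg_one_le_sin (δ / 2)]
  have hsq : sin (δ / 2) ^ 2 ≤ (δ / 2) ^ 2 := sq_le_sq' hge hle
  nlinarith

lemma term_est (s δ : ℝ) (hs : s = 1 ∨ s = -1) (h0 : 0 ≤ δ) :
    |(|2 * cos (π / 3 + s * δ) - 1|) - Real.sqrt 3 * δ| ≤ 4 * δ ^ 2 := by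
  have hs3 : Real.sqrt 3 ≤ 1.75 := by
    rw [show (1.75:ℝ) = Real.sqrt (1.75^2) by rw [Real.sqrt_sq]; norm_num]
    apply Real.sqrt_le_sqrt; norm_num
  have hs3' : (0:ℝ) ≤ Real.sqrt 3 := Real.sqrt_nonneg 3
  have hA : 2 * cos (π / 3 + s * δ) - 1 = cos δ - 1 - s * (Real.sqrt 3 * sin δ) := by
    rcases hs with rfl | rfl <;>
      simp [Real.cos_add, Real.cos_pi_div_three, Real.sin_pi_div_three] <;> ring
  set A := 2 * cos (π / 3 + s * δ) - 1 with hAdef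
  have hb : Real.sqrt 3 * δ = |-(s * (Real.sqrt 3 * δ))| := by
    rcases hs with rfl | rfl <;> simp [abs_of_nonneg, mul_nonneg hs3' h0]
  calc |(|A|) - Real.sqrt 3 * δ| = |(|A|) - (|-(s * (Real.sqrt 3 * δ))|)| := by rw [← hb]
    _ ≤ |A - -(s * (Real.sqrt 3 * δ))| := abs_abs_sub_abs_le_abs_sub _ _
    _ = |(cos δ - 1) + s * (Real.sqrt 3 * (δ - sin δ))| := by rw [hA]; ring_nf
    _ ≤ |cos δ - 1| + |s * (Real.sqrt 3 * (δ - sin δ))| := abs_add_le _ _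
    _ ≤ δ ^ 2 / 2 + Real.sqrt 3 * (2 * δ ^ 2) := by
        have h1 : |cos δ - 1| ≤ δ ^ 2 / 2 := by
          rw [abs_sub_comm, abs_of_nonneg (by linarith [Real.cos_le_one δ])]
          exact one_sub_cos_bound h0
        have h2 : |s * (Real.sqrt 3 * (δ - sin δ))| ≤ Real.sqrt 3 * (2 * δ ^ 2) := by
          have hsin : 0 ≤ δ - sin δ := by
            rcases le_or_gt 0 δ with _ | _
            · linarith [Real.sin_le h0]
            · linarith [Real.sin_le h0]
          rcases hs with rfl | rfl <;>
            · rw [abs_mul, abs_mul, abs_of_nonneg hs3', abs_of_nonneg hsin]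
              simp only [abs_one, abs_neg, one_mul]
              nlinarith [sin_sub_bound h0]
        linarith
    _ ≤ 4 * δ ^ 2 := by nlinarith

lemma gap_est (s δ θ : ℝ) (hs : s = 1 ∨ s = -1) (h0 : 0 ≤ δ)
    (hθ : θ / 2 = π / 3 + s * δ) :
    |2 * Real.sqrt (gFun θ) - 2 * (Real.sqrt 3 * δ)| ≤ 8 * δ ^ 2 := by
  rw [sqrt_gFun, hθ]
  have h := term_est s δ hs h0
  have h2 : 2 * (|2 * cos (π / 3 + s * δ) - 1|) - 2 * (Real.sqrt 3 * δ)
      = 2 * ((|2 * cos (π / 3 + s * δ) - 1|) - Real.sqrt 3 * δ) := by ring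
  rw [h2, abs_mul]
  rw [abs_of_nonneg (by norm_num : (0:ℝ) ≤ 2)]
  linarith

lemma min_est {A B t ε : ℝ} (hA : |A - t| ≤ ε) (hB : t - ε ≤ B) :
    |min A B - t| ≤ ε := by
  rw [abs_le] at hA ⊢
  refine ⟨?_, ?_⟩
  · have := le_min (show t - ε ≤ A by linarith [hA.1]) hB
    linarith
  · have := min_le_left A B
    linarith [hA.2]

set_option maxHeartbeats 1000000 in
/-- There exists `C > 0` such that for every positive integer `p` not
divisible by `3`,
`| 2·min{√(g((2π/p)⌊p/3⌋)), √(g((2π/p)⌈p/3⌉))} − 2π/(√3·p) | ≤ C/p²`; i.e. the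
HOMO-LUMO gap of the family `X_{p,q}` equals `2π/(√3·p) + O(p⁻²)`. -/
theorem stmt_17 :
    ∃ C > (0 : ℝ), ∀ p : ℕ, 0 < p → ¬ (3 ∣ p) →
      |2 * min (Real.sqrt (gFun (2 * π / p * (⌊(p : ℝ) / 3⌋ : ℤ))))
               (Real.sqrt (gFun (2 * π / p * (⌈(p : ℝ) / 3⌉ : ℤ))))
        - 2 * π / (Real.sqrt 3 * p)| ≤ C / (p : ℝ) ^ 2 := by
  refine ⟨36, by norm_num, ?_⟩
  intro p hp hdvd
  have hp0 : (0:ℝ) < p := by exact_mod_cast hp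
  set r := p % 3 with hrdef
  set m := p / 3 with hmdef
  have hpm : 3 * m + r = p := Nat.div_add_mod p 3
  have hrcase : r = 1 ∨ r = 2 := by omega
  have hpmR : 3 * (m:ℝ) + (r:ℝ) = (p:ℝ) := by exact_mod_cast hpm
  have hr1 : (1:ℝ) ≤ r := by rcases hrcase with h | h <;> rw [h] <;> norm_num
  have hr2 : (r:ℝ) ≤ 2 := by rcases hrcase with h | h <;> rw [h] <;> norm_num
  have hfloor : ⌊(p : ℝ) / 3⌋ = (m : ℤ) := by
    rw [Int.floor_eq_iff]
    constructor
    · push_cast; nlinarith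
    · push_cast; nlinarith
  have hceil : ⌈(p : ℝ) / 3⌉ = (m : ℤ) + 1 := by
    rw [Int.ceil_eq_iff]
    constructor
    · push_cast; nlinarith
    · push_cast; nlinarith
  rw [hfloor, hceil]
  push_cast
  have hπ := Real.pi_pos
  have hπ315 := Real.pi_lt_d2
  have hs3 : Real.sqrt 3 * Real.sqrt 3 = 3 := Real.mul_self_sqrt (by norm_num)
  have hs3pos : (0:ℝ) < Real.sqrt 3 := Real.sqrt_pos.mpr (by norm_num)
  set δa : ℝ := π * r / (3 * p) with hδa
  set δb : ℝ := π * (3 - r) / (3 * p) with hδb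
  have hδa0 : 0 ≤ δa := by rw [hδa]; positivity
  have hδb0 : 0 ≤ δb := by
    rw [hδb]
    have : (0:ℝ) ≤ 3 - r := by linarith
    positivity
  have hm' : (m:ℝ) = ((p:ℝ) - r) / 3 := by linarith
  have hangA : (2 * π / p * (m : ℝ)) / 2 = π / 3 + (-1) * δa := by
    rw [hδa, hm']
    field_simp
    ring
  have hangB : (2 * π / p * ((m : ℝ) + 1)) / 2 = π / 3 + 1 * δb := by
    rw [hδb, hm']
    field_simp
    ring
  have hA := gap_est (-1) δa _ (Or.inr rfl) hδa0 hangA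
  have hB := gap_est 1 δb _ (Or.inl rfl) hδb0 hangB
  have hmin : 2 * min (Real.sqrt (gFun (2 * π / p * (m : ℝ))))
      (Real.sqrt (gFun (2 * π / p * ((m : ℝ) + 1))))
      = min (2 * Real.sqrt (gFun (2 * π / p * (m : ℝ))))
            (2 * Real.sqrt (gFun (2 * π / p * ((m : ℝ) + 1)))) :=
    mul_min_of_nonneg _ _ (by norm_num)
  rw [hmin]
  set A := 2 * Real.sqrt (gFun (2 * π / p * (m : ℝ))) with hAd
  set B := 2 * Real.sqrt (gFun (2 * π / p * ((m : ℝ) + 1))) with hBd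
  have hA0 : 0 ≤ A := by rw [hAd]; positivity
  have hB0 : 0 ≤ B := by rw [hBd]; positivity
  have ht : 2 * π / (Real.sqrt 3 * p) = 2 * (Real.sqrt 3 * (π / (3 * p))) := by
    rw [div_eq_iff (by positivity : Real.sqrt 3 * (p:ℝ) ≠ 0)]
    field_simp
    linear_combination (-1 : ℝ) * hs3
  have hp2 : (0:ℝ) < (p:ℝ) ^ 2 := by positivity
  have hπ2 : π ^ 2 ≤ 10 := by nlinarith
  have hnum1 : 8 * (π / (3 * (p:ℝ))) ^ 2 ≤ 36 / (p:ℝ) ^ 2 := by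
    have he : 8 * (π / (3 * (p:ℝ))) ^ 2 = (8 * π ^ 2 / 9) / (p:ℝ) ^ 2 := by
      field_simp; ring
    rw [he, div_le_div_iff₀ hp2 hp2]
    nlinarith [mul_le_mul_of_nonneg_right hπ2 hp2.le]
  have hnum2 : 8 * (2 * (π / (3 * (p:ℝ)))) ^ 2 ≤ 36 / (p:ℝ) ^ 2 := by
    have he : 8 * (2 * (π / (3 * (p:ℝ)))) ^ 2 = (32 * π ^ 2 / 9) / (p:ℝ) ^ 2 := by
      field_simp; ring
    rw [he, div_le_div_iff₀ hp2 hp2]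
    nlinarith [mul_le_mul_of_nonneg_right hπ2 hp2.le]
  have hpos : 0 ≤ Real.sqrt 3 * (π / (3 * (p:ℝ))) := by positivity
  rcases hrcase with h | h
  · -- r = 1 : floor term is the good one
    have hda : δa = π / (3 * p) := by rw [hδa, h]; push_cast; ring
    have hdb : δb = 2 * (π / (3 * p)) := by rw [hδb, h]; push_cast; ring
    rw [hda] at hA
    rw [hdb] at hB
    apply min_est
    · rw [ht]
      exact le_trans hA hnum1
    · rw [abs_le] at hB
      rw [ht]
      linarith [hB.1, hnum2, hpos]
  · -- r = 2 : ceiling term is the good one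
    have hda : δa = 2 * (π / (3 * p)) := by rw [hδa, h]; push_cast; ring
    have hdb : δb = π / (3 * p) := by rw [hδb, h]; push_cast; ring
    rw [hda] at hA
    rw [hdb] at hB
    rw [min_comm]
    apply min_est
    · rw [ht]
      exact le_trans hB hnum1
    · rw [abs_le] at hA
      rw [ht]
      linarith [hA.1, hnum2, hpos]
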